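/- Identify the real quaternion algebra B_∞ with coordinates [a,b,c] + d = a𝐢 + b𝐣 + c𝐤 + d, where 𝐢² = −1, 𝐣² = ±1 (+1 in the indefinite case, −1 in the definite case), 𝐤 = 𝐢𝐣, and set P([a,b,c]+d) = a² + b² + c² + d². For T > 0 and δ ∈ (0,1], let Ω(δ,T) be the set of elements with P ≤ T² and b² + c² ≤ δT². Then for all 0 < δ ≤ 1 and all x, y ∈ Ω(δ,T), the commutator [x,y] = xy − yx satisfies |q([x,y])| ≪ δT⁴ and P([x,y]) ≪ δT⁴, where q is the reduced norm and the implied constants are absolute. -/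

import Mathlib

set_option maxHeartbeats 1000000


open Quaternion

namespace Stmt11

variable (ε : ℝ)

/-- `P([a,b,c]+d) = a² + b² + c² + d²`. -/
def P (γ : ℍ[ℝ, -1, ε]) : ℝ := γ.imI ^ 2 + γ.imJ ^ 2 + γ.imK ^ 2 + γ.re ^ 2

/-- `u([a,b,c]+d) = b² + c²`. -/
def u (γ : ℍ[ℝ, -1, ε]) : ℝ := γ.imJ ^ 2 + γ.imK ^ 2

/-- The reduced norm `q(γ) = γ ⬝ star γ` (a scalar). -/
def q (γ : ℍ[ℝ, -1, ε]) : ℝ := (γ * star γ).re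

/-- `Ω(δ,T)` is the set of `[a,b,c]+d` with `a²+b²+c²+d² ≤ T²` and `b²+c² ≤ δT²`. -/
def Omega (δ T : ℝ) : Set ℍ[ℝ, -1, ε] := {γ | P ε γ ≤ T ^ 2 ∧ u ε γ ≤ δ * T ^ 2}

/-- For `x, y ∈ Ω(δ,T)` in the real quaternion algebra `B_∞` (split or definite), the
commutator `[x,y] = xy − yx` satisfies `|q([x,y])| ≪ δT⁴` and `P([x,y]) ≪ δT⁴`, with
absolute implied constants. -/
lemma key (δ T a b c d a' b' c' d' : ℝ) (hδ0 : 0 < δ) (hδ1 : δ ≤ 1) (hT : 0 < T)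
    (h1 : a^2+b^2+c^2+d^2 ≤ T^2) (h2 : b^2+c^2 ≤ δ*T^2)
    (h1' : a'^2+b'^2+c'^2+d'^2 ≤ T^2) (h2' : b'^2+c'^2 ≤ δ*T^2) :
    4*(b*c'-c*b')^2 + 4*(a*c'-c*a')^2 + 4*(a*b'-b*a')^2 ≤ 48*δ*T^4 := by
  have p1 : (b^2+c^2)*(b'^2+c'^2) ≤ (δ*T^2)*(δ*T^2) :=
    mul_le_mul h2 h2' (by positivity) (by positivity)
  have p2 : (a^2+b^2+c^2+d^2)*(b'^2+c'^2) ≤ T^2*(δ*T^2) :=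
    mul_le_mul h1 h2' (by positivity) (by positivity)
  have p3 : (b^2+c^2)*(a'^2+b'^2+c'^2+d'^2) ≤ (δ*T^2)*T^2 :=
    mul_le_mul h2 h1' (by positivity) (by positivity)
  have p4 : δ*(δ*T^4) ≤ 1*(δ*T^4) :=
    mul_le_mul_of_nonneg_right hδ1 (by positivity)
  nlinarith [sq_nonneg (b*c'+c*b'), sq_nonneg (a*c'+c*a'), sq_nonneg (a*b'+b*a'),
    sq_nonneg (b*b'), sq_nonneg (c*c'), sq_nonneg (a*c'), sq_nonneg (c*a'),
    sq_nonneg (a*b'), sq_nonneg (b*a'), sq_nonneg (b*c'), sq_nonneg (c*b'),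
    sq_nonneg (d*b'), sq_nonneg (d*c'), sq_nonneg (b*d'), sq_nonneg (c*d')]

theorem stmt_11 :
    ∃ C : ℝ, 0 < C ∧
      ∀ (ε : ℝ), (ε = 1 ∨ ε = -1) →
      ∀ (δ T : ℝ), 0 < δ → δ ≤ 1 → 0 < T →
      ∀ x y : ℍ[ℝ, -1, ε], x ∈ Omega ε δ T → y ∈ Omega ε δ T →
        |q ε (x * y - y * x)| ≤ C * δ * T ^ 4 ∧
          P ε (x * y - y * x) ≤ C * δ * T ^ 4 := by
  refine ⟨48, by norm_num, ?_⟩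
  rintro ε hε δ T hδ0 hδ1 hT x y hx hy
  simp only [Omega, Set.mem_setOf_eq, P, u] at hx hy
  obtain ⟨hx1, hx2⟩ := hx
  obtain ⟨hy1, hy2⟩ := hy
  set z := x * y - y * x with hz
  have hre : z.re = 0 := by simp [hz, QuaternionAlgebra.re_mul]; ring
  have hI : z.imI = -2*ε*(x.imJ*y.imK - x.imK*y.imJ) := by
    simp [hz, QuaternionAlgebra.imI_mul]; ring
  have hJ : z.imJ = -2*(x.imI*y.imK - x.imK*y.imI) := by
    simp [hz, QuaternionAlgebra.imJ_mul]; ring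
  have hK : z.imK = 2*(x.imI*y.imJ - x.imJ*y.imI) := by
    simp [hz, QuaternionAlgebra.imK_mul]; ring
  have he2 : ε^2 = 1 := by rcases hε with h | h <;> simp [h]
  have hk := key δ T x.imI x.imJ x.imK x.re y.imI y.imJ y.imK y.re hδ0 hδ1 hT
    hx1 hx2 hy1 hy2
  have hP : P ε z ≤ 48 * δ * T^4 := by
    simp only [P]
    rw [hre, hI, hJ, hK]
    have : (-2*ε*(x.imJ*y.imK - x.imK*y.imJ))^2 = 4*(x.imJ*y.imK - x.imK*y.imJ)^2 := by
      rw [mul_pow, mul_pow]; rw [show (-2:ℝ)^2 = 4 by norm_num]; rw [he2]; ring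
    rw [this]
    nlinarith [hk]
  refine ⟨?_, hP⟩
  have hq : q ε z = z.re^2 + z.imI^2 - ε*z.imJ^2 - ε*z.imK^2 := by
    simp [q, QuaternionAlgebra.re_mul]; ring
  have habs : |q ε z| ≤ P ε z := by
    simp only [P]
    rw [hq, hre, abs_le]
    rcases hε with h | h <;> subst h <;> constructor <;>
      nlinarith [sq_nonneg z.imI, sq_nonneg z.imJ, sq_nonneg z.imK]
  linarith


end Stmt11
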